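/- Suppose a group G acts geometrically on a CAT(0) space X and suppose g0 ∈ G has finite centralizer Z_{g0}, X \ F_{g0} is not connected, and each connected component of X \ F_{g0} is convex and not g0-invariant. Fix a basepoint x0 ∈ X and N > 0 with F_{g0} ⊆ B(x0, N). Then for every g ∈ G with d(x0, g x0) > 2N there exists h ∈ G of infinite order such that d(g x0, Im ξ_{h^∞}) ≤ N, where ξ_{h^∞} is the geodesic ray in X with ξ_{h^∞}(0) = x0 and ξ_{h^∞}(∞) = h^∞. -/

import Mathlib

open Metric Set Filter Pointwise

/-- A unit-speed geodesic segment from `x` to `y`, parametrized on `[0, dist x y]`. -/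
def IsGeodesicFromTo {X : Type*} [MetricSpace X] (f : ℝ → X) (x y : X) : Prop :=
  f 0 = x ∧ f (dist x y) = y ∧
    ∀ s ∈ Set.Icc (0 : ℝ) (dist x y), ∀ t ∈ Set.Icc (0 : ℝ) (dist x y),
      dist (f s) (f t) = |s - t|

/-- A geodesic metric space: any two points are joined by a geodesic segment. -/
def IsGeodesicSpace (X : Type*) [MetricSpace X] : Prop :=
  ∀ x y : X, ∃ f : ℝ → X, IsGeodesicFromTo f x y

/-- A CAT(0) space: a geodesic space all of whose geodesic triangles satisfy the CAT(0)
comparison inequality (stated here in its standard equivalent form: the comparison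
inequality for a point `z` and a point on a geodesic from `x` to `y`). -/
def IsCAT0Space (X : Type*) [MetricSpace X] : Prop :=
  IsGeodesicSpace X ∧
    ∀ (x y z : X) (f : ℝ → X), IsGeodesicFromTo f x y →
      ∀ t ∈ Set.Icc (0 : ℝ) 1,
        dist z (f (t * dist x y)) ^ 2 ≤
          (1 - t) * dist z x ^ 2 + t * dist z y ^ 2 - t * (1 - t) * dist x y ^ 2

/-- A subset `C` is (geodesically) convex: every geodesic segment between points of `C`
lies in `C`. -/
def GeodesicConvex {X : Type*} [MetricSpace X] (C : Set X) : Prop :=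
  ∀ x ∈ C, ∀ y ∈ C, ∀ f : ℝ → X, IsGeodesicFromTo f x y →
    ∀ t ∈ Set.Icc (0 : ℝ) (dist x y), f t ∈ C

/-- A geometric action: an action by isometries which is proper and cocompact. -/
structure IsGeometricAction (G X : Type*) [Group G] [MetricSpace X] [MulAction G X] : Prop where
  isometry : ∀ g : G, Isometry (fun x : X => g • x)
  proper : ∀ K : Set X, IsCompact K →
    {g : G | ((fun x : X => g • x) '' K ∩ K).Nonempty}.Finite
  cocompact : ∃ K : Set X, IsCompact K ∧ ⋃ g : G, (fun x : X => g • x) '' K = Set.univ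

/-- A unit-speed geodesic ray starting at `x0`. -/
def IsGeodesicRayFrom {X : Type*} [MetricSpace X] (x0 : X) (ξ : ℝ → X) : Prop :=
  ξ 0 = x0 ∧ ∀ s t : ℝ, 0 ≤ s → 0 ≤ t → dist (ξ s) (ξ t) = |s - t|

/-- The boundary of a proper CAT(0) space, modelled as the set of geodesic rays emanating
from the basepoint `x0`; the cone topology coincides with the topology of pointwise
convergence of rays (as a subspace of `ℝ → X` with the product topology). -/
abbrev Boundary (X : Type*) [MetricSpace X] (x0 : X) : Type _ :=
  {ξ : ℝ → X // IsGeodesicRayFrom x0 ξ}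

/-- Two maps `ℝ → X` are asymptotic if they are at bounded distance on `[0, ∞)`. -/
def AsymptoticMaps {X : Type*} [MetricSpace X] (f g : ℝ → X) : Prop :=
  ∃ C : ℝ, ∀ t : ℝ, 0 ≤ t → dist (f t) (g t) ≤ C

/-- The image `Im ξ` of a geodesic ray `ξ` (on `[0, ∞)`). -/
def rayImage {X : Type*} [MetricSpace X] {x0 : X} (ξ : Boundary X x0) : Set X :=
  ξ.1 '' Set.Ici (0 : ℝ)

/-- A sequence of points of `X` converges, in the cone topology on `X ∪ ∂X`, to the
boundary point `β`: the distances from the basepoint tend to infinity, and the geodesic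
segments from the basepoint to the points of the sequence converge pointwise to the ray
representing `β`. -/
def TendstoBoundary {X : Type*} [MetricSpace X] (x0 : X) (x : ℕ → X) (β : Boundary X x0) : Prop :=
  Tendsto (fun n => dist x0 (x n)) atTop atTop ∧
    ∀ f : ℕ → ℝ → X, (∀ n, IsGeodesicFromTo (f n) x0 (x n)) →
      ∀ t : ℝ, 0 ≤ t →
        Tendsto (fun n => f n (min t (dist x0 (x n)))) atTop (nhds (β.1 t))

section Basics
variable {X : Type*} [MetricSpace X]

lemma geo_dist_left {f : ℝ → X} {x y : X} (hf : IsGeodesicFromTo f x y)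
    {t : ℝ} (ht : t ∈ Set.Icc (0:ℝ) (dist x y)) : dist x (f t) = t := by
  have h0 : (0:ℝ) ∈ Set.Icc (0:ℝ) (dist x y) := ⟨le_refl _, dist_nonneg⟩
  have := hf.2.2 0 h0 t ht
  rw [hf.1] at this
  rw [this, abs_of_nonpos (by linarith [ht.1])]
  ring

lemma geo_dist_right {f : ℝ → X} {x y : X} (hf : IsGeodesicFromTo f x y)
    {t : ℝ} (ht : t ∈ Set.Icc (0:ℝ) (dist x y)) : dist (f t) y = dist x y - t := by
  have hd : (dist x y) ∈ Set.Icc (0:ℝ) (dist x y) := ⟨dist_nonneg, le_refl _⟩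
  have := hf.2.2 t ht (dist x y) hd
  rw [hf.2.1] at this
  rw [this, abs_of_nonpos (by linarith [ht.2])]
  ring

lemma geo_continuousOn {f : ℝ → X} {x y : X} (hf : IsGeodesicFromTo f x y) :
    ContinuousOn f (Set.Icc (0:ℝ) (dist x y)) := by
  apply LipschitzOnWith.continuousOn (K := 1)
  rw [lipschitzOnWith_iff_dist_le_mul]
  intro s hs t ht
  rw [hf.2.2 s hs t ht, Real.dist_eq]
  simp

lemma geodesic_unique (hC : IsCAT0Space X) {f f' : ℝ → X} {x y : X}
    (hf : IsGeodesicFromTo f x y) (hf' : IsGeodesicFromTo f' x y)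
    {t : ℝ} (ht : t ∈ Set.Icc (0:ℝ) (dist x y)) : f t = f' t := by
  set d := dist x y with hd
  rcases eq_or_lt_of_le (dist_nonneg : (0:ℝ) ≤ d) with h0 | h0
  · have : t = 0 := le_antisymm (by rw [show (0:ℝ) = dist x y from h0]; exact ht.2) ht.1
    rw [this, hf.1, hf'.1]
  · have hl : t / d ∈ Set.Icc (0:ℝ) 1 :=
      ⟨div_nonneg ht.1 (le_of_lt h0), (div_le_one h0).2 ht.2⟩
    have key := hC.2 x y (f' t) f hf (t/d) hl
    have htd : t / d * d = t := div_mul_cancel₀ t (ne_of_gt h0)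
    rw [htd] at key
    have h1 : dist (f' t) x = t := by
      rw [dist_comm]; exact geo_dist_left hf' ht
    have h2 : dist (f' t) y = d - t := by
      rw [dist_comm]
      have := geo_dist_right hf' ht
      rw [dist_comm] at this; exact this
    rw [h1, h2] at key
    have hz : dist (f' t) (f t) ^ 2 ≤ 0 := by
      rw [dist_comm (f' t) (f t)] at key ⊢
      have hne : d ≠ 0 := ne_of_gt h0
      calc dist (f t) (f' t) ^2 ≤ (1 - t/d) * t ^ 2 + t/d * (d - t)^2 - t/d * (1 - t/d) * d^2 := key
        _ = 0 := by field_simp; ring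
    have : dist (f' t) (f t) = 0 := by nlinarith [dist_nonneg (x := f' t) (y := f t)]
    exact (dist_eq_zero.1 this).symm

/-- convexity of the metric for two geodesics from a common basepoint -/
lemma geodesic_convexity (hC : IsCAT0Space X) {f f' : ℝ → X} {x z z' : X}
    (hf : IsGeodesicFromTo f x z) (hf' : IsGeodesicFromTo f' x z')
    {l : ℝ} (hl : l ∈ Set.Icc (0:ℝ) 1) :
    dist (f (l * dist x z)) (f' (l * dist x z')) ≤ l * dist z z' := by
  set L := dist x z with hL
  set L' := dist x z' with hL'
  have hLpos : (0:ℝ) ≤ L := dist_nonneg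
  have hL'pos : (0:ℝ) ≤ L' := dist_nonneg
  have hmem : l * L' ∈ Set.Icc (0:ℝ) L' :=
    ⟨mul_nonneg hl.1 hL'pos, by nlinarith [hl.2]⟩
  have A1 := hC.2 x z (f' (l * L')) f hf l hl
  have A2 := hC.2 x z' z f' hf' l hl
  have h1 : dist (f' (l * L')) x = l * L' := by
    rw [dist_comm]; exact geo_dist_left hf' hmem
  rw [h1] at A1
  have h2 : dist z x = L := dist_comm z x ▸ rfl
  rw [h2] at A2
  have hd1 : dist (f' (l*L')) z ^ 2 = dist z (f' (l*L')) ^2 := by rw [dist_comm]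
  rw [hd1] at A1
  -- combine
  have key : dist (f (l * L)) (f' (l * L')) ^ 2 ≤ (l * dist z z')^2 := by
    rw [dist_comm (f (l*L))]
    nlinarith [A1, A2, hl.1, hl.2]
  have h3 : (0:ℝ) ≤ l * dist z z' := mul_nonneg hl.1 dist_nonneg
  nlinarith [dist_nonneg (x := f (l * L)) (y := f' (l * L')), key, h3]

end Basics



lemma subgeodesic {X : Type*} [MetricSpace X] {f : ℝ → X} {x y : X}
    (hf : IsGeodesicFromTo f x y) {s1 s2 : ℝ}
    (h1 : s1 ∈ Set.Icc (0:ℝ) (dist x y)) (h2 : s2 ∈ Set.Icc (0:ℝ) (dist x y)) (h12 : s1 ≤ s2) :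
    IsGeodesicFromTo (fun u => f (s1 + u)) (f s1) (f s2) ∧ dist (f s1) (f s2) = s2 - s1 := by
  have hd : dist (f s1) (f s2) = s2 - s1 := by
    rw [hf.2.2 s1 h1 s2 h2, abs_of_nonpos (by linarith)]
    ring
  refine ⟨⟨by simp, ?_, ?_⟩, hd⟩
  · show f (s1 + dist (f s1) (f s2)) = f s2
    rw [hd, show s1 + (s2 - s1) = s2 by ring]
  · intro u hu u' hu'
    rw [hd] at hu hu'
    show dist (f (s1+u)) (f (s1+u')) = |u - u'|
    rw [hf.2.2 (s1+u) ⟨by linarith [hu.1, h1.1], by linarith [hu.2, h2.2]⟩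
      (s1+u') ⟨by linarith [hu'.1, h1.1], by linarith [hu'.2, h2.2]⟩,
      show s1 + u - (s1 + u') = u - u' by ring]

section ActionBasics
variable {G X : Type*} [Group G] [MetricSpace X] [MulAction G X]

lemma smul_dist' (hGA : IsGeometricAction G X) (c : G) (x y : X) :
    dist (c • x) (c • y) = dist x y := (hGA.isometry c).dist_eq x y

lemma smul_geodesic (hGA : IsGeometricAction G X) (c : G) {f : ℝ → X} {x y : X}
    (hf : IsGeodesicFromTo f x y) :
    IsGeodesicFromTo (fun t => c • f t) (c • x) (c • y) := by
  have hd : dist (c • x) (c • y) = dist x y := smul_dist' hGA c x y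
  refine ⟨by show c • f 0 = c • x; rw [hf.1], by show c • f (dist (c•x) (c•y)) = c • y; rw [hd, hf.2.1], ?_⟩
  intro s hs t ht
  rw [hd] at hs ht
  rw [smul_dist' hGA, hf.2.2 s hs t ht]

lemma fixedset_closed (hGA : IsGeometricAction G X) (c : G) :
    IsClosed {x : X | c • x = x} :=
  isClosed_eq (hGA.isometry c).continuous continuous_id

lemma fixedset_geo (hGA : IsGeometricAction G X) (hC : IsCAT0Space X) (c : G)
    {x y : X} (hx : c • x = x) (hy : c • y = y) {f : ℝ → X}
    (hf : IsGeodesicFromTo f x y) {t : ℝ} (ht : t ∈ Set.Icc (0:ℝ) (dist x y)) :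
    c • f t = f t := by
  have hf' : IsGeodesicFromTo (fun u => c • f u) x y := by
    have := smul_geodesic hGA c hf
    rwa [hx, hy] at this
  exact geodesic_unique hC hf' hf ht

lemma smul_connCompIn_subset {c : G} {S : Set X} {x : X}
    (hGA : IsGeometricAction G X) (hx : x ∈ S) :
    c • connectedComponentIn S x ⊆ connectedComponentIn (c • S) (c • x) := by
  have hpre : IsPreconnected (c • connectedComponentIn S x) := by
    rw [show c • connectedComponentIn S x = (fun z : X => c • z) '' connectedComponentIn S x
      from rfl]
    exact (isPreconnected_connectedComponentIn).image _
      (hGA.isometry c).continuous.continuousOn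
  refine hpre.subset_connectedComponentIn ?_ ?_
  · exact Set.smul_mem_smul_set (mem_connectedComponentIn hx)
  · exact Set.smul_set_mono (connectedComponentIn_subset S x)

lemma smul_connCompIn (hGA : IsGeometricAction G X) (c : G) {S : Set X} {x : X}
    (hx : x ∈ S) :
    c • connectedComponentIn S x = connectedComponentIn (c • S) (c • x) := by
  refine le_antisymm (smul_connCompIn_subset hGA hx) ?_
  have h2 := smul_connCompIn_subset (c := c⁻¹) (S := c • S) (x := c • x) hGA
    (Set.smul_mem_smul_set hx)
  rw [inv_smul_smul, inv_smul_smul] at h2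
  intro z hz
  have : c⁻¹ • z ∈ connectedComponentIn S x := h2 (Set.smul_mem_smul_set hz)
  have := Set.smul_mem_smul_set (a := c) this
  rwa [smul_inv_smul] at this

/-- a geodesic between points of different components of `Wᶜ` crosses `W` -/
lemma geodesic_cross {W : Set X} {z w : X} {f : ℝ → X}
    (hf : IsGeodesicFromTo f z w) (hzw : w ∉ connectedComponentIn Wᶜ z) :
    ∃ t ∈ Set.Icc (0:ℝ) (dist z w), f t ∈ W := by
  by_contra hno
  push_neg at hno
  have himg : f '' Set.Icc (0:ℝ) (dist z w) ⊆ Wᶜ := by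
    rintro _ ⟨t, ht, rfl⟩
    exact hno t ht
  have hpre : IsPreconnected (f '' Set.Icc (0:ℝ) (dist z w)) :=
    isPreconnected_Icc.image f (geo_continuousOn hf)
  have hz0 : z ∈ f '' Set.Icc (0:ℝ) (dist z w) :=
    ⟨0, ⟨le_refl _, dist_nonneg⟩, hf.1⟩
  have hw0 : w ∈ f '' Set.Icc (0:ℝ) (dist z w) :=
    ⟨dist z w, ⟨dist_nonneg, le_refl _⟩, hf.2.1⟩
  exact hzw (hpre.subset_connectedComponentIn hz0 himg hw0)

/-- points of a ball disjoint from `W` lie in the component of the center -/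
lemma ball_subset_comp (hC : IsCAT0Space X) {W : Set X} {p w : X} {R : ℝ}
    (hw : dist p w ≤ R) (hdisj : ∀ q : X, dist p q ≤ R → q ∉ W) :
    w ∈ connectedComponentIn Wᶜ p := by
  obtain ⟨f, hf⟩ := hC.1 p w
  have himg : f '' Set.Icc (0:ℝ) (dist p w) ⊆ Wᶜ := by
    rintro _ ⟨t, ht, rfl⟩
    exact hdisj (f t) (by rw [geo_dist_left hf ht]; exact ht.2.trans hw)
  have hpre : IsPreconnected (f '' Set.Icc (0:ℝ) (dist p w)) :=
    isPreconnected_Icc.image f (geo_continuousOn hf)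
  have hp0 : p ∈ f '' Set.Icc (0:ℝ) (dist p w) :=
    ⟨0, ⟨le_refl _, dist_nonneg⟩, hf.1⟩
  have hw0 : w ∈ f '' Set.Icc (0:ℝ) (dist p w) :=
    ⟨dist p w, ⟨dist_nonneg, le_refl _⟩, hf.2.1⟩
  exact hpre.subset_connectedComponentIn hp0 himg hw0

/-- two preconnected sets sharing a point, both avoiding `W`: same component -/
lemma comp_of_two_segments {W : Set X} {s t : Set X} {z p mid : X}
    (hs : IsPreconnected s) (ht : IsPreconnected t)
    (hsW : s ⊆ Wᶜ) (htW : t ⊆ Wᶜ) (hmid_s : mid ∈ s) (hmid_t : mid ∈ t)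
    (hz : z ∈ s) (hp : p ∈ t) : z ∈ connectedComponentIn Wᶜ p := by
  have hu : IsPreconnected (s ∪ t) := hs.union mid hmid_s hmid_t ht
  exact hu.subset_connectedComponentIn (Or.inr hp) (Set.union_subset hsW htW) (Or.inl hz)

end ActionBasics

section Complete
variable {G X : Type*} [Group G] [MetricSpace X] [MulAction G X]

/-- Cauchy sequences converge in a space with a geometric action. -/
lemma cauchy_tendsto_of_geometric (hGA : IsGeometricAction G X) {u : ℕ → X}
    (hu : CauchySeq u) : ∃ p : X, Tendsto u atTop (nhds p) := by
  classical
  by_contra hcon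
  push_neg at hcon
  obtain ⟨K, hK, hcov⟩ := hGA.cocompact
  -- choose group elements and K-points representing u n
  have hrep : ∀ n : ℕ, ∃ gk : G × X, gk.2 ∈ K ∧ gk.1 • gk.2 = u n := by
    intro n
    have : u n ∈ ⋃ g : G, (fun x : X => g • x) '' K := by rw [hcov]; trivial
    obtain ⟨s, ⟨g', rfl⟩, hs⟩ := this
    obtain ⟨k, hk, hgk⟩ := hs
    exact ⟨(g', k), hk, hgk⟩
  choose gk hgk using hrep
  set g : ℕ → G := fun n => (gk n).1 with hgdef
  set k : ℕ → X := fun n => (gk n).2 with hkdef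
  have hkK : ∀ n, k n ∈ K := fun n => (hgk n).1
  have hgku : ∀ n, g n • k n = u n := fun n => (hgk n).2
  -- no value of g occurs infinitely often
  have star : ∀ g' : G, {n : ℕ | g n = g'}.Finite := by
    intro g'
    by_contra hinf
    rw [← Set.not_infinite, not_not] at hinf
    have hfreq : ∃ᶠ n in atTop, g n = g' := Nat.frequently_atTop_iff_infinite.2 hinf
    obtain ⟨φ, hφ, hgφ⟩ := Filter.extraction_of_frequently_atTop hfreq
    obtain ⟨a, haK, ψ, hψ, hconv⟩ :=
      hK.tendsto_subseq (x := fun i => k (φ i)) (fun i => hkK (φ i))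
    have hgoal : Tendsto (u ∘ (φ ∘ ψ)) atTop (nhds (g' • a)) := by
      have hcont : Continuous (fun x : X => g' • x) := (hGA.isometry g').continuous
      have h3 := (hcont.tendsto a).comp hconv
      refine h3.congr (fun i => ?_)
      simp only [Function.comp_apply]
      rw [← hgku (φ (ψ i)), hgφ (ψ i)]
    exact hcon (g' • a)
      (tendsto_nhds_of_cauchySeq_of_subseq hu ((hφ.comp hψ).tendsto_atTop) hgoal)
  -- Cauchy modulus
  have hMex : ∀ j : ℕ, ∃ Mj : ℕ, ∀ m n : ℕ, Mj ≤ m → Mj ≤ n →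
      dist (u m) (u n) ≤ (1/2 : ℝ)^j := by
    intro j
    obtain ⟨Mj, hMj⟩ := Metric.cauchySeq_iff.1 hu ((1/2:ℝ)^j) (by positivity)
    exact ⟨Mj, fun m n hm hn => le_of_lt (hMj m hm n hn)⟩
  choose M hM using hMex
  -- given a finite set of values to avoid, we can find a fresh pair
  have avoid : ∀ (j : ℕ) (V : Finset G), ∃ m : ℕ, M j ≤ m ∧ (g (M j))⁻¹ * g m ∉ V := by
    intro j V
    have hfin : {m : ℕ | (g (M j))⁻¹ * g m ∈ V}.Finite := by
      have : {m : ℕ | (g (M j))⁻¹ * g m ∈ V} ⊆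
          ⋃ v ∈ V, {m : ℕ | g m = g (M j) * v} := by
        intro m hm
        simp only [Set.mem_iUnion, Set.mem_setOf_eq]
        exact ⟨(g (M j))⁻¹ * g m, hm, by group⟩
      exact Set.Finite.subset (V.finite_toSet.biUnion (fun v _ => star (g (M j) * v))) this
    obtain ⟨b, hb⟩ := hfin.bddAbove
    refine ⟨max (M j) (b + 1), le_max_left _ _, fun hmem => ?_⟩
    have := hb hmem
    have h2 : b + 1 ≤ max (M j) (b+1) := le_max_right _ _
    omega
  -- recursively build pairs with distinct values
  let St : ℕ → Finset G × ℕ := fun j => Nat.rec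
    (⟨{(g (M 0))⁻¹ * g (avoid 0 ∅).choose}, (avoid 0 ∅).choose⟩)
    (fun j' ih => ⟨insert ((g (M (j'+1)))⁻¹ * g ((avoid (j'+1) ih.1).choose)) ih.1,
      (avoid (j'+1) ih.1).choose⟩) j
  set mseq : ℕ → ℕ := fun j => (St j).2 with hmseq
  set v : ℕ → G := fun j => (g (M j))⁻¹ * g (mseq j) with hvdef
  have hSt_succ : ∀ j, St (j+1) = ⟨insert ((g (M (j+1)))⁻¹ * g ((avoid (j+1) (St j).1).choose)) (St j).1,
      (avoid (j+1) (St j).1).choose⟩ := fun j => rfl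
  have hm_ge : ∀ j, M j ≤ mseq j := by
    intro j
    cases j with
    | zero => exact (avoid 0 ∅).choose_spec.1
    | succ j' => exact (avoid (j'+1) (St j').1).choose_spec.1
  have hv_mem : ∀ j, v j ∈ (St j).1 := by
    intro j
    cases j with
    | zero => exact Finset.mem_singleton_self _
    | succ j' => exact Finset.mem_insert_self _ _
  have hmono : ∀ j, (St j).1 ⊆ (St (j+1)).1 := by
    intro j
    rw [hSt_succ j]
    exact Finset.subset_insert _ _
  have hmono' : ∀ i j, i ≤ j → (St i).1 ⊆ (St j).1 := by
    intro i j hij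
    induction j with
    | zero => simp_all
    | succ j' ih =>
      rcases Nat.lt_or_ge i (j'+1) with h | h
      · exact (ih (by omega)).trans (hmono j')
      · have : i = j' + 1 := by omega
        subst this; exact subset_rfl
  have hv_fresh : ∀ j, v (j+1) ∉ (St j).1 := by
    intro j
    exact (avoid (j+1) (St j).1).choose_spec.2
  have hv_inj : Function.Injective v := by
    have key : ∀ i j, i < j → v i ≠ v j := by
      intro i j hij
      obtain ⟨j', rfl⟩ : ∃ j', j = j' + 1 := ⟨j - 1, by omega⟩
      intro he
      exact hv_fresh j' (he ▸ hmono' i j' (by omega) (hv_mem i))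
    intro i j he
    rcases lt_trichotomy i j with h | h | h
    · exact absurd he (key i j h)
    · exact h
    · exact absurd he.symm (key j i h)
  -- the escaping points
  set q : ℕ → X := fun j => v j • k (mseq j) with hqdef
  have hq_close : ∀ j, dist (q j) (k (M j)) ≤ (1/2:ℝ)^j := by
    intro j
    have h1 : dist (q j) (k (M j)) = dist (g (M j) • q j) (g (M j) • k (M j)) :=
      (smul_dist' hGA _ _ _).symm
    rw [h1]
    have h2 : g (M j) • q j = u (mseq j) := by
      rw [hqdef]
      simp only []
      rw [smul_smul, hvdef]
      simp only []
      rw [mul_inv_cancel_left]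
      exact hgku (mseq j)
    rw [h2, hgku (M j)]
    exact hM j (mseq j) (M j) (hm_ge j) le_rfl
  -- Q is compact
  have hQseq : IsSeqCompact (K ∪ Set.range q) := by
    intro x hx
    by_cases hcase : {i : ℕ | x i ∈ K}.Infinite
    · obtain ⟨φ, hφ, hφK⟩ := Filter.extraction_of_frequently_atTop
        (Nat.frequently_atTop_iff_infinite.2 hcase)
      obtain ⟨a, haK, ψ, hψ, hconv⟩ := hK.tendsto_subseq hφK
      exact ⟨a, Or.inl haK, φ ∘ ψ, hφ.comp hψ, hconv⟩
    · rw [Set.not_infinite] at hcase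
      have hinf : {i : ℕ | x i ∈ Set.range q}.Infinite := by
        have hsub : {i : ℕ | x i ∈ K}ᶜ ⊆ {i : ℕ | x i ∈ Set.range q} := by
          intro i hi
          rcases hx i with h | h
          · exact absurd h hi
          · exact h
        exact Set.Infinite.mono hsub (Set.Finite.infinite_compl hcase)
      obtain ⟨φ, hφ, hφq⟩ := Filter.extraction_of_frequently_atTop
        (Nat.frequently_atTop_iff_infinite.2 hinf)
      choose j hj using hφq
      by_cases hrep : ∃ c : ℕ, {i : ℕ | j i = c}.Infinite
      · obtain ⟨c, hc⟩ := hrep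
        obtain ⟨ψ, hψ, hψc⟩ := Filter.extraction_of_frequently_atTop
          (Nat.frequently_atTop_iff_infinite.2 hc)
        refine ⟨q c, Or.inr ⟨c, rfl⟩, φ ∘ ψ, hφ.comp hψ, ?_⟩
        have : ∀ i, (x ∘ (φ ∘ ψ)) i = q c := by
          intro i
          simp only [Function.comp_apply]
          rw [← hj (ψ i), hψc i]
        rw [show (x ∘ (φ ∘ ψ)) = fun _ => q c from funext this]
        exact tendsto_const_nhds
      · push_neg at hrep
        have hjtop : Tendsto j atTop atTop := by
          refine Filter.tendsto_atTop.2 (fun b => ?_)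
          rw [← Nat.cofinite_eq_atTop, Filter.eventually_cofinite]
          have : {i : ℕ | ¬ b ≤ j i} ⊆ ⋃ c ∈ Finset.range b, {i : ℕ | j i = c} := by
            intro i hi
            simp only [Set.mem_setOf_eq, not_le] at hi
            simp only [Set.mem_iUnion, Finset.mem_range]
            exact ⟨j i, hi, rfl⟩
          refine Set.Finite.subset ?_ this
          refine Set.Finite.biUnion (Finset.range b).finite_toSet (fun c _ => ?_)
          have := hrep c
          exact this
        obtain ⟨a, haK, ψ, hψ, hconv⟩ := hK.tendsto_subseq (fun i => hkK (M (j i)))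
        refine ⟨a, Or.inl haK, φ ∘ ψ, hφ.comp hψ, ?_⟩
        rw [tendsto_iff_dist_tendsto_zero]
        have hbound : ∀ i, dist ((x ∘ (φ ∘ ψ)) i) a ≤
            (1/2:ℝ)^(j (ψ i)) + dist (k (M (j (ψ i)))) a := by
          intro i
          calc dist ((x ∘ (φ ∘ ψ)) i) a
              ≤ dist ((x ∘ (φ ∘ ψ)) i) (k (M (j (ψ i)))) + dist (k (M (j (ψ i)))) a :=
                dist_triangle _ _ _
            _ ≤ _ := by
                have hxi : (x ∘ (φ ∘ ψ)) i = q (j (ψ i)) := by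
                  simp only [Function.comp_apply]
                  exact (hj (ψ i)).symm
                rw [hxi]
                exact add_le_add_left (hq_close (j (ψ i))) _
        refine squeeze_zero (fun i => dist_nonneg) hbound ?_
        have h1 : Tendsto (fun i => ((1:ℝ)/2)^(j (ψ i))) atTop (nhds 0) :=
          (tendsto_pow_atTop_nhds_zero_of_lt_one (by norm_num) (by norm_num)).comp
            (hjtop.comp hψ.tendsto_atTop)
        have h2 : Tendsto (fun i => dist (k (M (j (ψ i)))) a) atTop (nhds 0) := by
          have := tendsto_iff_dist_tendsto_zero.1 hconv
          exact this
        simpa using h1.add h2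
  have hQcomp : IsCompact (K ∪ Set.range q) := hQseq.isCompact
  have hS := hGA.proper _ hQcomp
  have hsub : Set.range v ⊆ {g' : G |
      ((fun x : X => g' • x) '' (K ∪ Set.range q) ∩ (K ∪ Set.range q)).Nonempty} := by
    rintro _ ⟨j, rfl⟩
    exact ⟨q j, ⟨⟨k (mseq j), Or.inl (hkK _), rfl⟩, Or.inr ⟨j, rfl⟩⟩⟩
  exact absurd (hS.subset hsub) (Set.infinite_range_of_injective hv_inj)

end Complete

set_option maxHeartbeats 3000000 in
/-- Key step in the proof of the main theorem: under the hypotheses of the main theorem,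
with basepoint `x0` and `N > 0` such that `F_{g0} ⊆ B(x0, N)`, for every `g ∈ G` with
`d(x0, g x0) > 2N` there exists an infinite-order element `h ∈ G` such that
`d(g x0, Im ξ_{h^∞}) ≤ N`, where `ξ_{h^∞}` is the geodesic ray from `x0` to `h^∞`. -/
theorem exists_infinite_order_ray_near_orbit_point
    {G X : Type*} [Group G] [MetricSpace X] [MulAction G X]
    (hGA : IsGeometricAction G X) (hCAT : IsCAT0Space X) (g0 : G)
    (hZ : {h : G | g0 * h = h * g0}.Finite)
    (hdisc : ¬ IsPreconnected {x : X | g0 • x = x}ᶜ)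
    (hcomp : ∀ x ∈ {x : X | g0 • x = x}ᶜ,
      GeodesicConvex (connectedComponentIn {x : X | g0 • x = x}ᶜ x) ∧
        g0 • connectedComponentIn {x : X | g0 • x = x}ᶜ x ≠
          connectedComponentIn {x : X | g0 • x = x}ᶜ x)
    (x0 : X) (N : ℝ) (hN : 0 < N)
    (hF : {x : X | g0 • x = x} ⊆ Metric.closedBall x0 N) :
    ∀ g : G, dist x0 (g • x0) > 2 * N →
      ∃ h : G, ¬ IsOfFinOrder h ∧
        ∃ β : Boundary X x0, TendstoBoundary x0 (fun n => (h ^ n) • x0) β ∧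
          infDist (g • x0) (rayImage β) ≤ N := by
  classical
  intro g hg
  set A : Set X := {x : X | g0 • x = x} with hAdef
  set y : X := g • x0 with hydef
  set D : ℝ := dist x0 y with hDdef
  have hD : 2 * N < D := hg
  set γ : ℝ := D - 2*N with hγdef
  have hγ : 0 < γ := by simp only [hγdef]; linarith
  set r : G := g * g0 * g⁻¹ with hrdef
  set B : Set X := {x : X | r • x = x} with hBdef
  set h : G := r * g0 with hhdef
  -- basic smul facts
  have smulcompl : ∀ (c : G) (S : Set X), c • Sᶜ = (c • S)ᶜ := by
    intro c S
    ext w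
    rw [Set.mem_smul_set_iff_inv_smul_mem, Set.mem_compl_iff, Set.mem_compl_iff,
      Set.mem_smul_set_iff_inv_smul_mem]
  have hB_eq : B = g • A := by
    ext x
    rw [Set.mem_smul_set_iff_inv_smul_mem]
    show r • x = x ↔ g0 • (g⁻¹ • x) = g⁻¹ • x
    rw [hrdef, mul_smul, mul_smul]
    constructor
    · intro hx
      calc g0 • (g⁻¹ • x) = g⁻¹ • (g • (g0 • (g⁻¹ • x))) := (inv_smul_smul g _).symm
        _ = g⁻¹ • x := by rw [hx]
    · intro hx
      rw [hx, smul_inv_smul]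
  -- distance facts
  have hAball : ∀ a ∈ A, dist x0 a ≤ N := by
    intro a ha
    have := hF ha
    rwa [Metric.mem_closedBall, dist_comm] at this
  have hBball : ∀ b ∈ B, dist y b ≤ N := by
    intro b hb
    rw [hB_eq] at hb
    obtain ⟨a, ha, rfl⟩ := hb
    rw [hydef, smul_dist' hGA]
    exact hAball a ha
  -- A nonempty
  have hXconn : IsPreconnected (Set.univ : Set X) := by
    apply isPreconnected_of_forall x0
    intro y' _
    obtain ⟨f, hf⟩ := hCAT.1 x0 y'
    exact ⟨f '' Set.Icc 0 (dist x0 y'), Set.subset_univ _,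
      ⟨0, ⟨le_refl _, dist_nonneg⟩, hf.1⟩,
      ⟨dist x0 y', ⟨dist_nonneg, le_refl _⟩, hf.2.1⟩,
      isPreconnected_Icc.image f (geo_continuousOn hf)⟩
  have hAne : A.Nonempty := by
    by_contra hne
    rw [Set.not_nonempty_iff_eq_empty] at hne
    apply hdisc
    rw [hne, Set.compl_empty]
    exact hXconn
  obtain ⟨a₀, ha₀⟩ := hAne
  have hb₀ : g • a₀ ∈ B := by rw [hB_eq]; exact Set.smul_mem_smul_set ha₀
  set b₀ : X := g • a₀ with hb₀def
  -- closedness and convexity of walls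
  have hAconv : ∀ p q : X, p ∈ A → q ∈ A → ∀ f : ℝ → X, IsGeodesicFromTo f p q →
      ∀ t ∈ Set.Icc (0:ℝ) (dist p q), f t ∈ A := by
    intro p q hp hq f hf t ht
    exact fixedset_geo hGA hCAT g0 hp hq hf ht
  have hBconv : ∀ p q : X, p ∈ B → q ∈ B → ∀ f : ℝ → X, IsGeodesicFromTo f p q →
      ∀ t ∈ Set.Icc (0:ℝ) (dist p q), f t ∈ B := by
    intro p q hp hq f hf t ht
    exact fixedset_geo hGA hCAT r hp hq hf ht
  have hdAB : ∀ a ∈ A, ∀ b ∈ B, γ ≤ dist a b := by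
    intro a ha b hb
    have h1 := hAball a ha
    have h2 := hBball b hb
    have h3 : dist x0 y ≤ dist x0 a + dist a b + dist b y := dist_triangle4 x0 a b y
    rw [dist_comm b y] at h3
    rw [hγdef, hDdef]
    linarith
  -- generic move lemma
  have move : ∀ (W : Set X) (c : G), ({x : X | c • x = x} = W) →
      (∀ x ∈ Wᶜ, c • connectedComponentIn Wᶜ x ≠ connectedComponentIn Wᶜ x) →
      ∀ z, z ∉ W → (c • z ∉ W ∧ c • z ∉ connectedComponentIn Wᶜ z) := by
    intro W c hfix hmv z hz
    constructor
    · intro hcz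
      have h1 : c • (c • z) = c • z := by
        rw [← hfix] at hcz
        exact hcz
      have h2 : c • z = z := smul_left_cancel_iff c |>.mp h1
      rw [← hfix] at hz
      exact hz h2
    · intro hmem
      have h1 : connectedComponentIn Wᶜ (c • z) = connectedComponentIn Wᶜ z :=
        (connectedComponentIn_eq hmem).symm
      have hWfix : c • W = W := by
        ext w
        rw [Set.mem_smul_set_iff_inv_smul_mem]
        constructor
        · intro hw
          have h1 : c • (c⁻¹ • w) = c⁻¹ • w := by rw [← hfix] at hw; exact hw
          rw [smul_inv_smul] at h1
          rw [← hfix]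
          show c • w = w
          calc c • w = c • (c⁻¹ • w) := by rw [← h1]
            _ = w := smul_inv_smul c w
        · intro hw
          have h1 : c • w = w := by rw [← hfix] at hw; exact hw
          have h2 : c⁻¹ • (c • w) = c⁻¹ • w := congrArg (fun u => c⁻¹ • u) h1
          rw [inv_smul_smul] at h2
          rw [← hfix]
          show c • (c⁻¹ • w) = c⁻¹ • w
          rw [← h2]
          exact h1
      have h2 : c • Wᶜ = Wᶜ := by rw [smulcompl, hWfix]
      have h3 := smul_connCompIn hGA c (S := Wᶜ) (x := z) hz
      rw [h2] at h3
      rw [h1] at h3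
      exact hmv z hz h3
  -- instantiate move lemmas
  have hfixA : {x : X | g0 • x = x} = A := hAdef.symm
  have hmvA : ∀ x ∈ Aᶜ, g0 • connectedComponentIn Aᶜ x ≠ connectedComponentIn Aᶜ x :=
    fun x hx => (hcomp x hx).2
  have invmv : ∀ (W : Set X) (c : G), ({x : X | c • x = x} = W) →
      (∀ x ∈ Wᶜ, c • connectedComponentIn Wᶜ x ≠ connectedComponentIn Wᶜ x) →
      (({x : X | c⁻¹ • x = x} = W) ∧
        ∀ x ∈ Wᶜ, c⁻¹ • connectedComponentIn Wᶜ x ≠ connectedComponentIn Wᶜ x) := by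
    intro W c hfix hmv
    constructor
    · rw [← hfix]
      ext x
      simp only [Set.mem_setOf_eq]
      rw [inv_smul_eq_iff]
      exact eq_comm
    · intro x hx heq
      apply hmv x hx
      have h2 := congrArg (fun S : Set X => c • S) heq
      simp only [smul_inv_smul] at h2
      exact h2.symm
  have moveA := move A g0 hfixA hmvA
  have moveAinv := move A g0⁻¹ (invmv A g0 hfixA hmvA).1 (invmv A g0 hfixA hmvA).2
  have hfixB : {x : X | r • x = x} = B := hBdef.symm
  have hBc : Bᶜ = g • Aᶜ := by rw [smulcompl, hB_eq]
  have hmvB : ∀ w ∈ Bᶜ, r • connectedComponentIn Bᶜ w ≠ connectedComponentIn Bᶜ w := by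
    intro w hw heq
    have hx : g⁻¹ • w ∈ Aᶜ := by
      rw [hBc] at hw
      exact Set.mem_smul_set_iff_inv_smul_mem.1 hw
    have e1 := smul_connCompIn hGA g hx
    rw [← hBc, smul_inv_smul] at e1
    rw [← e1] at heq
    have h3 : (r * g) • connectedComponentIn Aᶜ (g⁻¹ • w) =
        g • connectedComponentIn Aᶜ (g⁻¹ • w) := by rw [mul_smul]; exact heq
    have hrg : r * g = g * g0 := by rw [hrdef]; group
    rw [hrg, mul_smul] at h3
    have h5 : g0 • connectedComponentIn Aᶜ (g⁻¹ • w) = connectedComponentIn Aᶜ (g⁻¹ • w) :=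
      (smul_left_cancel_iff g).mp h3
    exact (hcomp _ hx).2 h5
  have moveB := move B r hfixB hmvB
  have moveBinv := move B r⁻¹ (invmv B r hfixB hmvB).1 (invmv B r hfixB hmvB).2
  -- far-point lemmas
  have hDd : dist x0 y = D := hDdef.symm
  have hx0B : ∀ q : X, dist x0 q ≤ N → q ∉ B := by
    intro q hq hqB
    have h1 := hBball q hqB
    have h2 : D ≤ dist x0 q + dist y q := by
      rw [← hDd, dist_comm y q]
      exact dist_triangle x0 q y
    linarith
  have hyA : ∀ q : X, dist y q ≤ N → q ∉ A := by
    intro q hq hqA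
    have h1 := hAball q hqA
    have h2 : D ≤ dist x0 q + dist y q := by
      rw [← hDd, dist_comm y q]
      exact dist_triangle x0 q y
    linarith
  have hballB : ∀ w : X, dist x0 w ≤ N → w ∈ connectedComponentIn Bᶜ x0 :=
    fun w hw => ball_subset_comp hCAT hw hx0B
  have hballA : ∀ w : X, dist y w ≤ N → w ∈ connectedComponentIn Aᶜ y :=
    fun w hw => ball_subset_comp hCAT hw hyA
  have hACB : ∀ a ∈ A, a ∈ connectedComponentIn Bᶜ x0 := fun a ha => hballB a (hAball a ha)
  have hBCA : ∀ b ∈ B, b ∈ connectedComponentIn Aᶜ y := fun b hb => hballA b (hBball b hb)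
  have hAnotB : ∀ a ∈ A, a ∉ B := fun a ha => hx0B a (hAball a ha)
  have hBnotA : ∀ b ∈ B, b ∉ A := fun b hb => hyA b (hBball b hb)
  have hAnotCAy : ∀ a ∈ A, a ∉ connectedComponentIn Aᶜ y :=
    fun a ha hmem => (connectedComponentIn_subset Aᶜ y hmem) ha
  have hx0notB : x0 ∉ B := hx0B x0 (by rw [dist_self]; exact hN.le)
  have hCAeq : ∀ z, z ∈ connectedComponentIn Aᶜ y →
      connectedComponentIn Aᶜ z = connectedComponentIn Aᶜ y :=
    fun z hz => (connectedComponentIn_eq hz).symm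
  have hCBeq : ∀ z, z ∈ connectedComponentIn Bᶜ x0 →
      connectedComponentIn Bᶜ z = connectedComponentIn Bᶜ x0 :=
    fun z hz => (connectedComponentIn_eq hz).symm
  -- crossing lemma with distances
  have crossdist : ∀ (W : Set X) (z w : X), w ∉ connectedComponentIn Wᶜ z →
      ∃ q ∈ W, dist z w = dist z q + dist q w := by
    intro W z w hcw
    obtain ⟨f, hf⟩ := hCAT.1 z w
    obtain ⟨t, ht, hW⟩ := geodesic_cross hf hcw
    refine ⟨f t, hW, ?_⟩
    rw [geo_dist_left hf ht, geo_dist_right hf ht]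
    ring
  -- gap between B and h • B
  have hgapB : ∀ b ∈ B, ∀ b' ∈ B, 2*γ ≤ dist b (h • b') := by
    intro b hb b' hb'
    have hrb : r⁻¹ • b = b := inv_smul_eq_iff.2 (show b = r • b from hb.symm)
    have e1 : dist b (h • b') = dist b (g0 • b') := by
      rw [hhdef, mul_smul]
      calc dist b (r • (g0 • b'))
          = dist (r⁻¹ • b) (r⁻¹ • (r • (g0 • b'))) := (smul_dist' hGA r⁻¹ _ _).symm
        _ = dist b (g0 • b') := by rw [hrb, inv_smul_smul]
    have hmv := moveA b' (hBnotA b' hb')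
    have hnc : g0 • b' ∉ connectedComponentIn Aᶜ b := by
      rw [hCAeq b (hBCA b hb), ← hCAeq b' (hBCA b' hb')]
      exact hmv.2
    obtain ⟨a, haA, hsum⟩ := crossdist A b (g0 • b') hnc
    have d1 : γ ≤ dist b a := by rw [dist_comm]; exact hdAB a haA b hb
    have d2 : γ ≤ dist a (g0 • b') := by
      have e2 : dist a (g0 • b') = dist a b' := by
        calc dist a (g0 • b') = dist (g0 • a) (g0 • b') := by
              rw [show g0 • a = a from haA]
          _ = dist a b' := smul_dist' hGA g0 a b'
      rw [e2]
      exact hdAB a haA b' hb'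
    rw [e1, hsum]
    linarith
  -- alpha lemmas
  have alpha' : ∀ z, z ∉ A → z ∉ connectedComponentIn Aᶜ y →
      z ∈ connectedComponentIn Bᶜ x0 := by
    intro z hzA hzy
    obtain ⟨f, hf⟩ := hCAT.1 z b₀
    have hb₀z : b₀ ∉ connectedComponentIn Aᶜ z := by
      intro hmem
      have e1 : connectedComponentIn Aᶜ z = connectedComponentIn Aᶜ b₀ :=
        connectedComponentIn_eq hmem
      have e2 : connectedComponentIn Aᶜ y = connectedComponentIn Aᶜ b₀ :=
        connectedComponentIn_eq (hBCA b₀ hb₀)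
      exact hzy (by rw [e2, ← e1]; exact mem_connectedComponentIn hzA)
    obtain ⟨t₁, ht₁, ha₁⟩ := geodesic_cross hf hb₀z
    have hseg1 : ∀ s ∈ Set.Icc (0:ℝ) t₁, f s ∉ B := by
      intro s hs hfsB
      have hsIcc : s ∈ Set.Icc (0:ℝ) (dist z b₀) := ⟨hs.1, hs.2.trans ht₁.2⟩
      have hds : dist (f s) b₀ = dist z b₀ - s := geo_dist_right hf hsIcc
      have hsub : IsGeodesicFromTo (fun u => f (s + u)) (f s) b₀ := by
        refine ⟨by simp, ?_, ?_⟩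
        · show f (s + dist (f s) b₀) = b₀
          rw [hds, show s + (dist z b₀ - s) = dist z b₀ by ring, hf.2.1]
        · intro u hu u' hu'
          rw [hds] at hu hu'
          have e3 := hf.2.2 (s+u) ⟨by linarith [hu.1, hs.1], by linarith [hu.2]⟩
            (s+u') ⟨by linarith [hu'.1, hs.1], by linarith [hu'.2]⟩
          show dist (f (s+u)) (f (s+u')) = |u - u'|
          rw [e3, show s + u - (s + u') = u - u' by ring]
      have hmem2 : t₁ - s ∈ Set.Icc (0:ℝ) (dist (f s) b₀) := by
        rw [hds]
        exact ⟨by linarith [hs.2], by linarith [ht₁.2]⟩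
      have hft₁ : f t₁ ∈ B := by
        have h6 := hBconv (f s) b₀ hfsB hb₀ _ hsub (t₁ - s) hmem2
        simpa [show s + (t₁ - s) = t₁ by ring] using h6
      exact hAnotB (f t₁) ha₁ hft₁
    obtain ⟨f₂, hf₂⟩ := hCAT.1 (f t₁) x0
    have hseg2 : ∀ u ∈ Set.Icc (0:ℝ) (dist (f t₁) x0), f₂ u ∉ B := by
      intro u hu
      apply hx0B
      have e1 : dist (f₂ u) x0 = dist (f t₁) x0 - u := geo_dist_right hf₂ hu
      have e2 : dist (f t₁) x0 ≤ N := by rw [dist_comm]; exact hAball _ ha₁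
      rw [dist_comm, e1]
      linarith [hu.1]
    apply comp_of_two_segments (W := B) (s := f '' Set.Icc 0 t₁)
      (t := f₂ '' Set.Icc 0 (dist (f t₁) x0)) (mid := f t₁)
    · exact isPreconnected_Icc.image f
        ((geo_continuousOn hf).mono (Set.Icc_subset_Icc le_rfl ht₁.2))
    · exact isPreconnected_Icc.image f₂ (geo_continuousOn hf₂)
    · rintro _ ⟨s, hs, rfl⟩; exact hseg1 s hs
    · rintro _ ⟨u, hu, rfl⟩; exact hseg2 u hu
    · exact ⟨t₁, ⟨ht₁.1, le_refl _⟩, rfl⟩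
    · exact ⟨0, ⟨le_refl _, dist_nonneg⟩, hf₂.1⟩
    · exact ⟨0, ⟨le_refl _, ht₁.1⟩, hf.1⟩
    · exact ⟨dist (f t₁) x0, ⟨dist_nonneg, le_refl _⟩, hf₂.2.1⟩
  have alpha'' : ∀ z, z ∉ B → z ∉ connectedComponentIn Bᶜ x0 →
      z ∈ connectedComponentIn Aᶜ y := by
    intro z hzB hzx
    obtain ⟨f, hf⟩ := hCAT.1 z a₀
    have ha₀z : a₀ ∉ connectedComponentIn Bᶜ z := by
      intro hmem
      have e1 : connectedComponentIn Bᶜ z = connectedComponentIn Bᶜ a₀ :=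
        connectedComponentIn_eq hmem
      have e2 : connectedComponentIn Bᶜ x0 = connectedComponentIn Bᶜ a₀ :=
        connectedComponentIn_eq (hACB a₀ ha₀)
      exact hzx (by rw [e2, ← e1]; exact mem_connectedComponentIn hzB)
    obtain ⟨t₁, ht₁, hb₁⟩ := geodesic_cross hf ha₀z
    have hseg1 : ∀ s ∈ Set.Icc (0:ℝ) t₁, f s ∉ A := by
      intro s hs hfsA
      have hsIcc : s ∈ Set.Icc (0:ℝ) (dist z a₀) := ⟨hs.1, hs.2.trans ht₁.2⟩
      have hds : dist (f s) a₀ = dist z a₀ - s := geo_dist_right hf hsIcc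
      have hsub : IsGeodesicFromTo (fun u => f (s + u)) (f s) a₀ := by
        refine ⟨by simp, ?_, ?_⟩
        · show f (s + dist (f s) a₀) = a₀
          rw [hds, show s + (dist z a₀ - s) = dist z a₀ by ring, hf.2.1]
        · intro u hu u' hu'
          rw [hds] at hu hu'
          have e3 := hf.2.2 (s+u) ⟨by linarith [hu.1, hs.1], by linarith [hu.2]⟩
            (s+u') ⟨by linarith [hu'.1, hs.1], by linarith [hu'.2]⟩
          show dist (f (s+u)) (f (s+u')) = |u - u'|
          rw [e3, show s + u - (s + u') = u - u' by ring]
      have hmem2 : t₁ - s ∈ Set.Icc (0:ℝ) (dist (f s) a₀) := by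
        rw [hds]
        exact ⟨by linarith [hs.2], by linarith [ht₁.2]⟩
      have hft₁ : f t₁ ∈ A := by
        have h6 := hAconv (f s) a₀ hfsA ha₀ _ hsub (t₁ - s) hmem2
        simpa [show s + (t₁ - s) = t₁ by ring] using h6
      exact hBnotA (f t₁) hb₁ hft₁
    obtain ⟨f₂, hf₂⟩ := hCAT.1 (f t₁) y
    have hseg2 : ∀ u ∈ Set.Icc (0:ℝ) (dist (f t₁) y), f₂ u ∉ A := by
      intro u hu
      apply hyA
      have e1 : dist (f₂ u) y = dist (f t₁) y - u := geo_dist_right hf₂ hu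
      have e2 : dist (f t₁) y ≤ N := by rw [dist_comm]; exact hBball _ hb₁
      rw [dist_comm, e1]
      linarith [hu.1]
    apply comp_of_two_segments (W := A) (s := f '' Set.Icc 0 t₁)
      (t := f₂ '' Set.Icc 0 (dist (f t₁) y)) (mid := f t₁)
    · exact isPreconnected_Icc.image f
        ((geo_continuousOn hf).mono (Set.Icc_subset_Icc le_rfl ht₁.2))
    · exact isPreconnected_Icc.image f₂ (geo_continuousOn hf₂)
    · rintro _ ⟨s, hs, rfl⟩; exact hseg1 s hs
    · rintro _ ⟨u, hu, rfl⟩; exact hseg2 u hu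
    · exact ⟨t₁, ⟨ht₁.1, le_refl _⟩, rfl⟩
    · exact ⟨0, ⟨le_refl _, dist_nonneg⟩, hf₂.1⟩
    · exact ⟨0, ⟨le_refl _, ht₁.1⟩, hf.1⟩
    · exact ⟨dist (f t₁) y, ⟨dist_nonneg, le_refl _⟩, hf₂.2.1⟩
  -- ping-pong transitions
  have hQsub : ∀ z, z ∉ connectedComponentIn Aᶜ y → z ∈ connectedComponentIn Bᶜ x0 := by
    intro z hz
    by_cases hzA : z ∈ A
    · exact hACB z hzA
    · exact alpha' z hzA hz
  have hPsub : ∀ z, z ∉ connectedComponentIn Bᶜ x0 → z ∈ connectedComponentIn Aᶜ y := by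
    intro z hz
    by_cases hzB : z ∈ B
    · exact hBCA z hzB
    · exact alpha'' z hzB hz
  have hQP : ∀ z, z ∉ connectedComponentIn Aᶜ y →
      (r • z ∉ connectedComponentIn Bᶜ x0 ∧ r • z ∉ B) := by
    intro z hz
    have hzB : z ∉ B := fun hzB => hz (hBCA z hzB)
    have hzC : z ∈ connectedComponentIn Bᶜ x0 := hQsub z hz
    have hmv := moveB z hzB
    refine ⟨?_, hmv.1⟩
    rw [← hCBeq z hzC]
    exact hmv.2
  have hPQ : ∀ z, z ∉ connectedComponentIn Bᶜ x0 →
      (g0 • z ∉ connectedComponentIn Aᶜ y ∧ g0 • z ∉ A) := by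
    intro z hz
    have hzA : z ∉ A := fun hzA => hz (hACB z hzA)
    have hzC : z ∈ connectedComponentIn Aᶜ y := hPsub z hz
    have hmv := moveA z hzA
    refine ⟨?_, hmv.1⟩
    rw [← hCAeq z hzC]
    exact hmv.2
  have hPP : ∀ z, z ∉ connectedComponentIn Bᶜ x0 →
      (h • z ∉ connectedComponentIn Bᶜ x0 ∧ h • z ∉ B) := by
    intro z hz
    have h1 := hPQ z hz
    have h2 := hQP (g0 • z) h1.1
    have e : h • z = r • (g0 • z) := by rw [hhdef, mul_smul]
    rw [e]
    exact h2
  have hQQinv : ∀ z, z ∉ connectedComponentIn Aᶜ y →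
      (h⁻¹ • z ∉ connectedComponentIn Aᶜ y ∧ h⁻¹ • z ∉ A) := by
    intro z hz
    have hzB : z ∉ B := fun hzB => hz (hBCA z hzB)
    have hzC : z ∈ connectedComponentIn Bᶜ x0 := hQsub z hz
    have hmv := moveBinv z hzB
    have hw1 : r⁻¹ • z ∉ connectedComponentIn Bᶜ x0 := by
      rw [← hCBeq z hzC]
      exact hmv.2
    have hw2 : r⁻¹ • z ∈ connectedComponentIn Aᶜ y := hPsub _ hw1
    have hw3 : r⁻¹ • z ∉ A := fun hA => (connectedComponentIn_subset Aᶜ y hw2) hA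
    have hmv2 := moveAinv (r⁻¹ • z) hw3
    have e : h⁻¹ • z = g0⁻¹ • (r⁻¹ • z) := by rw [hhdef, mul_inv_rev, mul_smul]
    constructor
    · rw [e, ← hCAeq _ hw2]
      exact hmv2.2
    · rw [e]
      exact hmv2.1
  -- orbit itineraries
  have smul_pow_succ : ∀ (n : ℕ) (p : X), h^(n+1) • p = h • (h^n • p) := by
    intro n p
    rw [pow_succ', mul_smul]
  have smul_pow_succ' : ∀ (n : ℕ) (p : X), (h⁻¹)^(n+1) • p = h⁻¹ • ((h⁻¹)^n • p) := by
    intro n p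
    rw [pow_succ', mul_smul]
  have horbP : ∀ n : ℕ, 1 ≤ n →
      (h^n • a₀ ∉ connectedComponentIn Bᶜ x0 ∧ h^n • a₀ ∉ B) := by
    intro n hn
    induction n with
    | zero => omega
    | succ n ih =>
      by_cases hn1 : 1 ≤ n
      · rw [smul_pow_succ n a₀]
        exact hPP _ (ih hn1).1
      · have hn0 : n = 0 := by omega
        subst hn0
        have e : h^1 • a₀ = r • a₀ := by
          rw [pow_one, hhdef, mul_smul, show g0 • a₀ = a₀ from ha₀]
        rw [e]
        exact hQP a₀ (hAnotCAy a₀ ha₀)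
  have horbQ : ∀ n : ℕ, (h⁻¹)^n • a₀ ∉ connectedComponentIn Aᶜ y := by
    intro n
    induction n with
    | zero => simpa using hAnotCAy a₀ ha₀
    | succ n ih =>
      rw [smul_pow_succ' n a₀]
      exact (hQQinv _ ih).1
  have horbQC : ∀ n : ℕ, (h⁻¹)^n • a₀ ∈ connectedComponentIn Bᶜ x0 :=
    fun n => hQsub _ (horbQ n)
  have hBorbP : ∀ b ∈ B, ∀ k : ℕ, h^k • b ∉ connectedComponentIn Bᶜ x0 := by
    intro b hb k
    induction k with
    | zero =>
      simp only [pow_zero, one_smul]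
      exact fun hmem => (connectedComponentIn_subset Bᶜ x0 hmem) hb
    | succ k ih =>
      rw [smul_pow_succ]
      exact (hPP _ ih).1
  have hBorbQ : ∀ b ∈ B, ∀ k : ℕ, 1 ≤ k →
      ((h⁻¹)^k • b ∉ connectedComponentIn Aᶜ y ∧ (h⁻¹)^k • b ∉ A) := by
    intro b hb k hk
    induction k with
    | zero => omega
    | succ k ih =>
      by_cases hk1 : 1 ≤ k
      · rw [smul_pow_succ' k b]
        exact hQQinv _ (ih hk1).1
      · have hk0 : k = 0 := by omega
        subst hk0
        have hrbinv : r⁻¹ • b = b := inv_smul_eq_iff.2 (show b = r • b from hb.symm)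
        have e : (h⁻¹)^1 • b = g0⁻¹ • b := by
          rw [pow_one, hhdef, mul_inv_rev, mul_smul, hrbinv]
        rw [e]
        have hbA : b ∉ A := hBnotA b hb
        have hmv := moveAinv b hbA
        constructor
        · rw [← hCAeq b (hBCA b hb)]
          exact hmv.2
        · exact hmv.1
  -- wall translate facts
  have hWfix : ∀ j : ℕ, (h^j : G) • B = {x : X | (h^j * r * (h^j)⁻¹) • x = x} := by
    intro j
    ext x
    rw [Set.mem_smul_set_iff_inv_smul_mem]
    show r • ((h^j)⁻¹ • x) = (h^j)⁻¹ • x ↔ _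
    constructor
    · intro hx
      show (h^j * r * (h^j)⁻¹) • x = x
      rw [mul_smul, mul_smul, hx, smul_inv_smul]
    · intro hx
      have h7 : (h^j)⁻¹ • ((h^j * r * (h^j)⁻¹) • x) = (h^j)⁻¹ • x := by rw [hx]
      rw [mul_smul, mul_smul, inv_smul_smul] at h7
      exact h7
  have hWclosed : ∀ j : ℕ, IsClosed ((h^j : G) • B) := by
    intro j
    rw [hWfix j]
    exact fixedset_closed hGA _
  have hWconv : ∀ j : ℕ, ∀ p q : X, p ∈ (h^j : G) • B → q ∈ (h^j : G) • B →
      ∀ f' : ℝ → X, IsGeodesicFromTo f' p q → ∀ u ∈ Set.Icc (0:ℝ) (dist p q),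
      f' u ∈ (h^j : G) • B := by
    intro j p q hp hq f' hf' u hu
    rw [hWfix j] at hp hq ⊢
    exact fixedset_geo hGA hCAT _ hp hq hf' hu
  have hcompW : ∀ j : ℕ, connectedComponentIn ((h^j : G) • B)ᶜ a₀ =
      (h^j : G) • connectedComponentIn Bᶜ x0 := by
    intro j
    have hWc : ((h^j:G) • B)ᶜ = (h^j:G) • Bᶜ := (smulcompl _ _).symm
    have ha₀W : a₀ ∈ (h^j:G) • connectedComponentIn Bᶜ x0 := by
      rw [Set.mem_smul_set_iff_inv_smul_mem, ← inv_pow]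
      exact horbQC j
    have e1 := smul_connCompIn hGA (h^j : G) (S := Bᶜ) (x := x0) hx0notB
    rw [← hWc] at e1
    have ha₀W2 : a₀ ∈ connectedComponentIn ((h^j:G)•B)ᶜ ((h^j:G) • x0) := by
      rw [← e1]
      exact ha₀W
    calc connectedComponentIn ((h^j:G)•B)ᶜ a₀
        = connectedComponentIn ((h^j:G)•B)ᶜ ((h^j:G) • x0) :=
          (connectedComponentIn_eq ha₀W2).symm
      _ = (h^j:G) • connectedComponentIn Bᶜ x0 := e1.symm
  -- the growth estimate
  have hgrowth : ∀ m : ℕ, 1 ≤ m → 2*γ*((m:ℝ)-1) ≤ dist a₀ (h^m • a₀) := by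
    intro m hm
    obtain ⟨f, hf⟩ := hCAT.1 a₀ (h^m • a₀)
    set L : ℝ := dist a₀ (h^m • a₀) with hL
    set T : ℕ → Set ℝ := fun j => Set.Icc (0:ℝ) L ∩ f ⁻¹' ((h^j : G) • B) with hT
    have hTsub : ∀ j, T j ⊆ Set.Icc (0:ℝ) L := fun j => Set.inter_subset_left
    have hcross : ∀ j : ℕ, j + 1 ≤ m → (T j).Nonempty := by
      intro j hjm
      have hm2 : h^m • a₀ ∉ connectedComponentIn ((h^j:G)•B)ᶜ a₀ := by
        rw [hcompW j, Set.mem_smul_set_iff_inv_smul_mem, ← inv_pow]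
        have e2 : (h⁻¹:G)^j • (h^m • a₀) = h^(m-j) • a₀ := by
          rw [← mul_smul]
          congr 1
          have e3 : h^j * h^(m-j) = h^m := by
            rw [← pow_add]
            congr 1
            omega
          rw [inv_pow, ← e3, inv_mul_cancel_left]
        rw [e2]
        exact (horbP (m-j) (by omega)).1
      obtain ⟨t, ht, hWt⟩ := geodesic_cross hf hm2
      exact ⟨t, ht, hWt⟩
    have hTcomp : ∀ j : ℕ, IsCompact (T j) := by
      intro j
      have hclosed : IsClosed (T j) :=
        (geo_continuousOn hf).preimage_isClosed_of_isClosed isClosed_Icc (hWclosed j)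
      exact isCompact_Icc.of_isClosed_subset hclosed (hTsub j)
    have htmin_mem : ∀ j, j+1 ≤ m → sInf (T j) ∈ T j :=
      fun j hj => (hTcomp j).sInf_mem (hcross j hj)
    have htmax_mem : ∀ j, j+1 ≤ m → sSup (T j) ∈ T j :=
      fun j hj => (hTcomp j).sSup_mem (hcross j hj)
    have horder : ∀ j : ℕ, j + 2 ≤ m → ∀ t ∈ T (j+1), sSup (T j) + 2*γ ≤ t := by
      intro j hj t ht
      have hmaxmem := htmax_mem j (by omega)
      have hmaxIcc : sSup (T j) ∈ Set.Icc (0:ℝ) L := hmaxmem.1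
      have hmaxW : f (sSup (T j)) ∈ (h^j:G) • B := hmaxmem.2
      have htIcc : t ∈ Set.Icc (0:ℝ) L := ht.1
      have htW : f t ∈ (h^(j+1):G) • B := ht.2
      obtain ⟨b', hb'B, hb'e⟩ := htW
      have hb'e2 : (h^(j+1) : G) • b' = f t := hb'e
      have e4 : f t = (h^j : G) • (h • b') := by
        rw [← hb'e2, ← mul_smul, ← pow_succ]
      have hgap2 : 2*γ ≤ dist (f (sSup (T j))) (f t) := by
        obtain ⟨b, hbB, hbe⟩ := hmaxW
        rw [← hbe, e4, smul_dist' hGA]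
        exact hgapB b hbB b' hb'B
      have hORD : sSup (T j) < t := by
        by_contra hlt
        push_neg at hlt
        rcases lt_or_ge t (sInf (T j)) with hcase | hcase
        · have havoid : ∀ s' ∈ Set.Icc (0:ℝ) t, f s' ∉ (h^j:G) • B := by
            intro s' hs' hmem
            have hs'T : s' ∈ T j := ⟨⟨hs'.1, le_trans hs'.2 htIcc.2⟩, hmem⟩
            have := csInf_le (hTcomp j).bddBelow hs'T
            linarith [hs'.2]
          have himg : f '' Set.Icc 0 t ⊆ ((h^j:G) • B)ᶜ := by
            rintro _ ⟨s', hs', rfl⟩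
            exact havoid s' hs'
          have hpre' : IsPreconnected (f '' Set.Icc 0 t) :=
            isPreconnected_Icc.image f
              ((geo_continuousOn hf).mono (Set.Icc_subset_Icc le_rfl htIcc.2))
          have hft_comp : f t ∈ connectedComponentIn ((h^j:G)•B)ᶜ a₀ :=
            hpre'.subset_connectedComponentIn ⟨0, ⟨le_rfl, htIcc.1⟩, hf.1⟩ himg
              ⟨t, ⟨htIcc.1, le_rfl⟩, rfl⟩
          rw [hcompW j, Set.mem_smul_set_iff_inv_smul_mem] at hft_comp
          rw [e4, inv_smul_smul] at hft_comp
          have hno := hBorbP b' hb'B 1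
          rw [pow_one] at hno
          exact hno hft_comp
        · -- t between sInf and sSup: f t ∈ W j
          have hminmem := htmin_mem j (by omega)
          have hminIcc : sInf (T j) ∈ Set.Icc (0:ℝ) L := hminmem.1
          have h12 : sInf (T j) ≤ sSup (T j) := le_trans hcase hlt
          obtain ⟨hsub, hd12⟩ := subgeodesic hf hminIcc hmaxIcc h12
          have hu : t - sInf (T j) ∈ Set.Icc (0:ℝ) (dist (f (sInf (T j))) (f (sSup (T j)))) := by
            rw [hd12]
            exact ⟨by linarith, by linarith⟩
          have hftW : f t ∈ (h^j:G) • B := by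
            have h8 := hWconv j _ _ hminmem.2 hmaxmem.2 _ hsub _ hu
            simpa [show sInf (T j) + (t - sInf (T j)) = t by ring] using h8
          obtain ⟨b, hbB, hbe⟩ := hftW
          have hbe2 : (h^j:G) • b = f t := hbe
          have e5 : b = h • b' := by
            have e6 : (h^j:G) • b = (h^j:G) • (h • b') := by rw [hbe2]; exact e4
            exact (smul_left_cancel_iff _).mp e6
          have h9 := hgapB b hbB b' hb'B
          rw [← e5, dist_self] at h9
          linarith
      have e6 : dist (f (sSup (T j))) (f t) = t - sSup (T j) := by
        rw [hf.2.2 _ hmaxIcc _ htIcc, abs_of_nonpos (by linarith)]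
        ring
      linarith
    have hstep : ∀ j : ℕ, j + 2 ≤ m → sSup (T j) + 2*γ ≤ sSup (T (j+1)) :=
      fun j hj => horder j hj _ (htmax_mem (j+1) (by omega))
    have hind : ∀ j : ℕ, j + 1 ≤ m → 2*γ*(j:ℝ) ≤ sSup (T j) := by
      intro j
      induction j with
      | zero =>
        intro hj
        have := (htmax_mem 0 hj).1.1
        simpa using this
      | succ j ih =>
        intro hj
        have h1 := ih (by omega)
        have h2 := hstep j (by omega)
        have e7 : 2*γ*((j:ℝ)+1) = 2*γ*(j:ℝ) + 2*γ := by ring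
        push_cast
        rw [e7]
        linarith
    have hfin := hind (m-1) (by omega)
    have hLePt : sSup (T (m-1)) ≤ L := (htmax_mem (m-1) (by omega)).1.2
    have hcast : ((m-1 : ℕ) : ℝ) = (m:ℝ) - 1 := by
      have : (1:ℕ) ≤ m := hm
      push_cast [this]
      ring
    rw [hcast] at hfin
    linarith
  -- orbit of x0: distance growth
  have hdista₀ : dist x0 a₀ ≤ N := hAball a₀ ha₀
  have hdz : ∀ n : ℕ, 1 ≤ n → 2*γ*((n:ℝ)-1) - 2*N ≤ dist x0 (h^n • x0) := by
    intro n hn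
    have h1 := hgrowth n hn
    have h2 : dist a₀ (h^n • a₀) ≤ dist a₀ x0 + dist x0 (h^n • x0) + dist (h^n • x0) (h^n • a₀) :=
      dist_triangle4 _ _ _ _
    have h3 : dist (h^n • x0) (h^n • a₀) = dist x0 a₀ := smul_dist' hGA _ _ _
    have h4 : dist a₀ x0 ≤ N := by rw [dist_comm]; exact hdista₀
    rw [h3] at h2
    linarith
  -- the threshold K₀
  obtain ⟨K₀, hK₀⟩ := exists_nat_gt ((D + 6*N + 1)/(2*γ) + 1)
  have hK₀' : ∀ k : ℕ, K₀ ≤ k → D + 6*N + 1 ≤ 2*γ*((k:ℝ)-1) := by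
    intro k hk
    have h1 : ((K₀:ℝ)) ≤ (k:ℝ) := Nat.cast_le.2 hk
    have h3 : (D + 6*N+1)/(2*γ) < (k:ℝ) - 1 := by linarith
    have h4 : (0:ℝ) < 2*γ := by linarith
    calc D + 6*N + 1 = ((D + 6*N+1)/(2*γ)) * (2*γ) := by field_simp
      _ ≤ ((k:ℝ)-1) * (2*γ) := mul_le_mul_of_nonneg_right (le_of_lt h3) h4.le
      _ = 2*γ*((k:ℝ)-1) := by ring
  have hK₀1 : 1 ≤ K₀ := by
    by_contra hc
    have : K₀ = 0 := by omega
    subst this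
    have h5 : (0:ℝ) < (D + 6*N + 1)/(2*γ) + 1 := by positivity
    simp at hK₀
    linarith
  have hdbig : ∀ n : ℕ, K₀ ≤ n → D + 4*N + 1 ≤ dist x0 (h^n • x0) := by
    intro n hn
    have h1 := hdz n (le_trans hK₀1 hn)
    have h2 := hK₀' n hn
    linarith
  -- far lemmas for orbit points of a₀
  have hinvdist : ∀ k : ℕ, dist ((h⁻¹)^k • a₀) a₀ = dist a₀ (h^k • a₀) := by
    intro k
    calc dist ((h⁻¹)^k • a₀) a₀
        = dist (h^k • ((h⁻¹)^k • a₀)) (h^k • a₀) := (smul_dist' hGA _ _ _).symm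
      _ = dist a₀ (h^k • a₀) := by rw [← mul_smul, inv_pow, mul_inv_cancel, one_smul]
  have hfarA : ∀ k : ℕ, K₀ ≤ k → ∀ q' ∈ A,
      N < dist (h^k • a₀) q' ∧ N < dist ((h⁻¹)^k • a₀) q' := by
    intro k hk q' hq'
    have hga := hgrowth k (le_trans hK₀1 hk)
    have hgK := hK₀' k hk
    have h1 : dist a₀ q' ≤ 2*N := by
      have := dist_triangle a₀ x0 q'
      have h4 : dist a₀ x0 ≤ N := by rw [dist_comm]; exact hdista₀
      have h5 := hAball q' hq'
      linarith
    constructor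
    · have h2 := dist_triangle a₀ q' (h^k • a₀)
      rw [dist_comm q' (h^k • a₀)] at h2
      linarith
    · have h2 := dist_triangle ((h⁻¹)^k • a₀) q' a₀
      rw [dist_comm q' a₀, hinvdist k] at h2
      linarith
  have hfarB : ∀ k : ℕ, K₀ ≤ k → ∀ q' ∈ B, N < dist (h^k • a₀) q' := by
    intro k hk q' hq'
    have hga := hgrowth k (le_trans hK₀1 hk)
    have hgK := hK₀' k hk
    have h1 : dist a₀ q' ≤ N + D + N := by
      have h2 := dist_triangle4 a₀ x0 y q'
      have h4 : dist a₀ x0 ≤ N := by rw [dist_comm]; exact hdista₀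
      have h5 := hBball q' hq'
      rw [hDd] at h2
      linarith
    have h2 := dist_triangle a₀ q' (h^k • a₀)
    rw [dist_comm q' (h^k • a₀)] at h2
    linarith
  -- whereabouts of the orbit of x0
  have horbnotA : ∀ k : ℕ, K₀ ≤ k → (h⁻¹)^k • a₀ ∉ A := by
    intro k hk hin
    have := (hfarA k hk _ hin).2
    rw [dist_self] at this
    linarith
  have hzmCA : ∀ k : ℕ, K₀ ≤ k → h^k • x0 ∈ connectedComponentIn Aᶜ y := by
    intro k hk
    have hdk : dist (h^k • a₀) (h^k • x0) ≤ N := by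
      rw [smul_dist' hGA, dist_comm]
      exact hdista₀
    have hball : h^k • x0 ∈ connectedComponentIn Aᶜ (h^k • a₀) :=
      ball_subset_comp hCAT hdk (fun q hq hqA => by
        have := (hfarA k hk q hqA).1
        linarith)
    have hmem : h^k • a₀ ∈ connectedComponentIn Aᶜ y :=
      Set.mem_of_mem_of_subset (hPsub _ (horbP k (le_trans hK₀1 hk)).1) subset_rfl
    rw [hCAeq _ hmem] at hball
    exact hball
  have hzmA' : ∀ k : ℕ, K₀ ≤ k →
      ((h⁻¹)^k • x0 ∉ connectedComponentIn Aᶜ y ∧ (h⁻¹)^k • x0 ∉ A) := by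
    intro k hk
    have hdk : dist ((h⁻¹)^k • a₀) ((h⁻¹)^k • x0) ≤ N := by
      rw [smul_dist' hGA, dist_comm]
      exact hdista₀
    have hball : (h⁻¹)^k • x0 ∈ connectedComponentIn Aᶜ ((h⁻¹)^k • a₀) :=
      ball_subset_comp hCAT hdk (fun q hq hqA => by
        have := (hfarA k hk q hqA).2
        linarith)
    refine ⟨?_, fun hin => (connectedComponentIn_subset Aᶜ _ hball) hin⟩
    intro hmem
    have e1 : connectedComponentIn Aᶜ ((h⁻¹)^k • a₀) = connectedComponentIn Aᶜ ((h⁻¹)^k • x0) :=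
      connectedComponentIn_eq hball
    have e2 : connectedComponentIn Aᶜ y = connectedComponentIn Aᶜ ((h⁻¹)^k • x0) :=
      connectedComponentIn_eq hmem
    have h6 : (h⁻¹)^k • a₀ ∈ connectedComponentIn Aᶜ y := by
      rw [e2, ← e1]
      exact mem_connectedComponentIn (horbnotA k hk)
    exact horbQ k h6
  have hzmB' : ∀ k : ℕ, K₀ ≤ k →
      (h^k • x0 ∉ connectedComponentIn Bᶜ x0 ∧ h^k • x0 ∉ B) := by
    intro k hk
    have hdk : dist (h^k • a₀) (h^k • x0) ≤ N := by
      rw [smul_dist' hGA, dist_comm]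
      exact hdista₀
    have hnB : ∀ q : X, dist (h^k • a₀) q ≤ N → q ∉ B := by
      intro q hq hqB
      have := hfarB k hk q hqB
      linarith
    have hball : h^k • x0 ∈ connectedComponentIn Bᶜ (h^k • a₀) :=
      ball_subset_comp hCAT hdk hnB
    refine ⟨?_, fun hin => (connectedComponentIn_subset Bᶜ _ hball) hin⟩
    intro hmem
    have e1 : connectedComponentIn Bᶜ (h^k • a₀) = connectedComponentIn Bᶜ (h^k • x0) :=
      connectedComponentIn_eq hball
    have e2 : connectedComponentIn Bᶜ x0 = connectedComponentIn Bᶜ (h^k • x0) :=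
      connectedComponentIn_eq hmem
    have h6 : h^k • a₀ ∈ connectedComponentIn Bᶜ x0 := by
      rw [e2, ← e1]
      exact mem_connectedComponentIn (by
        intro hin
        have := hfarB k hk _ hin
        rw [dist_self] at this
        linarith)
    exact (horbP k (le_trans hK₀1 hk)).1 h6
  -- crossing of the segment [x0, h^m x0] through B
  have hcrossB : ∀ m : ℕ, K₀ ≤ m → ∀ f' : ℝ → X, IsGeodesicFromTo f' x0 (h^m • x0) →
      ∃ s ∈ Set.Icc (0:ℝ) (dist x0 (h^m • x0)), f' s ∈ B := by
    intro m hk f' hf'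
    exact geodesic_cross hf' (by
      intro hmem
      have e2 : connectedComponentIn Bᶜ x0 = connectedComponentIn Bᶜ (h^m • x0) :=
        connectedComponentIn_eq hmem
      exact (hzmB' m hk).1 (by rw [e2]; exact mem_connectedComponentIn (hzmB' m hk).2))
  -- crossing of [x0, h^(n+k) x0] through h^n • A
  have hcrossA : ∀ n k : ℕ, K₀ ≤ n → K₀ ≤ k → ∀ f' : ℝ → X,
      IsGeodesicFromTo f' x0 (h^(n+k) • x0) →
      ∃ s ∈ Set.Icc (0:ℝ) (dist x0 (h^(n+k) • x0)), f' s ∈ (h^n : G) • A := by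
    intro n k hn hk f' hf'
    apply geodesic_cross hf'
    intro hmem
    -- translate back by h^n
    have hAc : ((h^n:G) • A)ᶜ = (h^n:G) • Aᶜ := (smulcompl _ _).symm
    have hx0nA : (h⁻¹)^n • x0 ∉ A := (hzmA' n hn).2
    have e1 := smul_connCompIn hGA (h^n:G) (S := Aᶜ) (x := (h⁻¹)^n • x0) hx0nA
    have e5 : (h^n : G) • ((h⁻¹)^n • x0) = x0 := by
      rw [← mul_smul, inv_pow, mul_inv_cancel, one_smul]
    rw [← hAc, e5] at e1
    -- x0's component of the wall (h^n A)
    have hx0mem : x0 ∈ connectedComponentIn ((h^n:G) • A)ᶜ x0 := by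
      apply mem_connectedComponentIn
      intro hin
      rw [Set.mem_smul_set_iff_inv_smul_mem, ← inv_pow] at hin
      exact hx0nA hin
    have e6 : connectedComponentIn ((h^n:G) • A)ᶜ x0 =
        (h^n:G) • connectedComponentIn Aᶜ ((h⁻¹)^n • x0) := e1.symm
    rw [e6, Set.mem_smul_set_iff_inv_smul_mem, ← inv_pow] at hmem
    have e7 : (h⁻¹:G)^n • (h^(n+k) • x0) = h^k • x0 := by
      rw [← mul_smul]
      congr 1
      rw [inv_pow, pow_add, inv_mul_cancel_left]
    rw [e7] at hmem
    -- h^k x0 ∈ CA y, so the component of (h⁻¹)^n x0 is CA y, contradiction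
    have e8 : connectedComponentIn Aᶜ ((h⁻¹)^n • x0) = connectedComponentIn Aᶜ (h^k • x0) :=
      connectedComponentIn_eq hmem
    have e9 : connectedComponentIn Aᶜ y = connectedComponentIn Aᶜ (h^k • x0) :=
      connectedComponentIn_eq (hzmCA k hk)
    have h6 : (h⁻¹)^n • x0 ∈ connectedComponentIn Aᶜ y := by
      rw [e9, ← e8]
      exact mem_connectedComponentIn (hzmA' n hn).2
    exact (hzmA' n hn).1 h6
  -- choose geodesics from x0 to the orbit points
  have hfex : ∀ n : ℕ, ∃ f' : ℝ → X, IsGeodesicFromTo f' x0 (h^n • x0) := fun n => hCAT.1 _ _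
  choose fseq hfseq using hfex
  -- comparison estimate
  have hEst : ∀ t : ℝ, 0 ≤ t → ∀ n m : ℕ, K₀ ≤ n → n + K₀ ≤ m →
      t ≤ dist x0 (h^n • x0) → t ≤ dist x0 (h^m • x0) →
      dist (fseq n t) (fseq m t) ≤ 2*N*t/(dist x0 (h^n • x0)) := by
    intro t ht n m hn hm htn htm
    obtain ⟨k, rfl⟩ : ∃ k, m = n + k := ⟨m - n, by omega⟩
    have hk : K₀ ≤ k := by omega
    obtain ⟨s, hsIcc, hsA⟩ := hcrossA n k hn hk (fseq (n+k)) (hfseq (n+k))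
    have hqd : dist (h^n • x0) (fseq (n+k) s) ≤ N := by
      obtain ⟨a, haA, hae⟩ := hsA
      have hae2 : (h^n:G) • a = fseq (n+k) s := hae
      rw [← hae2, smul_dist' hGA]
      exact hAball a haA
    have hs_eq : dist x0 (fseq (n+k) s) = s := geo_dist_left (hfseq (n+k)) hsIcc
    have hsd : |s - dist x0 (h^n • x0)| ≤ N := by
      have h5 : |dist x0 (fseq (n+k) s) - dist x0 (h^n • x0)| ≤
          dist (fseq (n+k) s) (h^n • x0) := by
        rw [dist_comm x0 (fseq (n+k) s), dist_comm x0 (h^n • x0)]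
        exact abs_dist_sub_le _ _ _
      rw [hs_eq] at h5
      have h6 : dist (fseq (n+k) s) (h^n • x0) = dist (h^n • x0) (fseq (n+k) s) :=
        dist_comm _ _
      rw [h6] at h5
      linarith [h5, hqd]
    have hfw : IsGeodesicFromTo (fseq (n+k)) x0 (fseq (n+k) s) := by
      refine ⟨(hfseq (n+k)).1, by rw [hs_eq], ?_⟩
      intro u hu u' hu'
      rw [hs_eq] at hu hu'
      exact (hfseq (n+k)).2.2 u ⟨hu.1, hu.2.trans hsIcc.2⟩ u' ⟨hu'.1, hu'.2.trans hsIcc.2⟩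
    have hdn_pos : (0:ℝ) < dist x0 (h^n • x0) := by
      have := hdbig n hn
      linarith
    have hlam : t / dist x0 (h^n • x0) ∈ Set.Icc (0:ℝ) 1 :=
      ⟨div_nonneg ht hdn_pos.le, (div_le_one hdn_pos).2 htn⟩
    have hcv := geodesic_convexity hCAT (hfseq n) hfw hlam
    rw [div_mul_cancel₀ t hdn_pos.ne'] at hcv
    rw [hs_eq] at hcv
    -- hcv : dist (fseq n t) (fseq (n+k) (t/dn * s)) ≤ t/dn * dist (h^n x0) (fseq (n+k) s)
    have hs0 : 0 ≤ s := hsIcc.1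
    have hts : t / dist x0 (h^n • x0) * s ∈ Set.Icc (0:ℝ) (dist x0 (h^(n+k) • x0)) := by
      constructor
      · positivity
      · calc t / dist x0 (h^n • x0) * s ≤ 1 * s := by
              apply mul_le_mul_of_nonneg_right hlam.2 hs0
          _ = s := one_mul s
          _ ≤ _ := hsIcc.2
    have htIcc : t ∈ Set.Icc (0:ℝ) (dist x0 (h^(n+k) • x0)) := ⟨ht, htm⟩
    have h8 : dist (fseq (n+k) (t / dist x0 (h^n • x0) * s)) (fseq (n+k) t) =
        |t / dist x0 (h^n • x0) * s - t| := (hfseq (n+k)).2.2 _ hts _ htIcc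
    have h9 : |t / dist x0 (h^n • x0) * s - t| ≤ N*t/(dist x0 (h^n • x0)) := by
      have e1 : t / dist x0 (h^n • x0) * s - t =
          (t / dist x0 (h^n • x0)) * (s - dist x0 (h^n • x0)) := by
        rw [mul_sub, div_mul_cancel₀ t hdn_pos.ne']
      rw [e1, abs_mul, abs_of_nonneg hlam.1]
      calc t / dist x0 (h^n • x0) * |s - dist x0 (h^n • x0)|
          ≤ t / dist x0 (h^n • x0) * N := by
            apply mul_le_mul_of_nonneg_left hsd hlam.1
        _ = N*t/(dist x0 (h^n • x0)) := by ring
    have h10 : t / dist x0 (h^n • x0) * dist (h^n • x0) (fseq (n+k) s) ≤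
        N*t/(dist x0 (h^n • x0)) := by
      calc t / dist x0 (h^n • x0) * dist (h^n • x0) (fseq (n+k) s)
          ≤ t / dist x0 (h^n • x0) * N := mul_le_mul_of_nonneg_left hqd hlam.1
        _ = N*t/(dist x0 (h^n • x0)) := by ring
    calc dist (fseq n t) (fseq (n+k) t)
        ≤ dist (fseq n t) (fseq (n+k) (t / dist x0 (h^n • x0) * s)) +
          dist (fseq (n+k) (t / dist x0 (h^n • x0) * s)) (fseq (n+k) t) := dist_triangle _ _ _
      _ ≤ N*t/(dist x0 (h^n • x0)) + N*t/(dist x0 (h^n • x0)) := by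
          rw [h8]
          exact add_le_add (le_trans hcv h10) h9
      _ = 2*N*t/(dist x0 (h^n • x0)) := by ring
  -- orbit escapes to infinity
  have hdtop : Tendsto (fun n : ℕ => dist x0 (h^n • x0)) atTop atTop := by
    apply tendsto_atTop_mono' atTop (eventually_atTop.2 ⟨1, fun n hn => hdz n hn⟩)
    have h1 : Tendsto (fun n : ℕ => (n:ℝ)) atTop atTop := tendsto_natCast_atTop_atTop
    have h2 : Tendsto (fun n : ℕ => (n:ℝ) - 1) atTop atTop :=
      tendsto_atTop_add_const_right atTop (-1) h1
    have h3 : Tendsto (fun n : ℕ => 2*γ*((n:ℝ) - 1)) atTop atTop := by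
      apply Tendsto.const_mul_atTop (by linarith : (0:ℝ) < 2*γ) h2
    exact tendsto_atTop_add_const_right atTop (-(2*N)) h3
  -- limits of the geodesics: the boundary ray
  have hlim : ∀ t : ℝ, 0 ≤ t →
      ∃ p : X, Tendsto (fun n => fseq n (min t (dist x0 (h^n • x0)))) atTop (nhds p) := by
    intro t ht
    apply cauchy_tendsto_of_geometric hGA
    rw [Metric.cauchySeq_iff]
    intro ε hε
    set C : ℝ := max t ((4*N*t+1)/ε) with hC
    obtain ⟨M0, hM0⟩ := eventually_atTop.1 (tendsto_atTop.1 hdtop C)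
    refine ⟨max M0 K₀, ?_⟩
    intro m hm n hn
    have hmM0 : M0 ≤ m := le_trans (le_max_left _ _) hm
    have hnM0 : M0 ≤ n := le_trans (le_max_left _ _) hn
    have hmK : K₀ ≤ m := le_trans (le_max_right _ _) hm
    have hnK : K₀ ≤ n := le_trans (le_max_right _ _) hn
    have hdm : C ≤ dist x0 (h^m • x0) := hM0 m hmM0
    have hdn : C ≤ dist x0 (h^n • x0) := hM0 n hnM0
    have htm : t ≤ dist x0 (h^m • x0) := le_trans (le_max_left _ _) hdm
    have htn : t ≤ dist x0 (h^n • x0) := le_trans (le_max_left _ _) hdn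
    set P : ℕ := m + n + K₀ with hP
    have hPM0 : M0 ≤ P := by omega
    have hdP : C ≤ dist x0 (h^P • x0) := hM0 P hPM0
    have htP : t ≤ dist x0 (h^P • x0) := le_trans (le_max_left _ _) hdP
    have hbound : ∀ j : ℕ, K₀ ≤ j → M0 ≤ j → j + K₀ ≤ P →
        dist (fseq j t) (fseq P t) < ε/2 := by
      intro j hjK hjM0 hjP
      have hdj : C ≤ dist x0 (h^j • x0) := hM0 j hjM0
      have htj : t ≤ dist x0 (h^j • x0) := le_trans (le_max_left _ _) hdj
      have h1 := hEst t ht j P hjK hjP htj htP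
      have hdj_pos : (0:ℝ) < dist x0 (h^j • x0) := by
        have := hdbig j hjK
        linarith
      have h2 : (4*N*t+1)/ε ≤ dist x0 (h^j • x0) := le_trans (le_max_right _ _) hdj
      have h3 : 4*N*t+1 ≤ ε * dist x0 (h^j • x0) := by
        rw [div_le_iff₀ hε] at h2
        linarith [h2]
      have h4 : 2*N*t/(dist x0 (h^j • x0)) < ε/2 := by
        rw [div_lt_iff₀ hdj_pos]
        nlinarith [h3]
      linarith
    have e1 : min t (dist x0 (h^m • x0)) = t := min_eq_left htm
    have e2 : min t (dist x0 (h^n • x0)) = t := min_eq_left htn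
    rw [e1, e2]
    calc dist (fseq m t) (fseq n t)
        ≤ dist (fseq m t) (fseq P t) + dist (fseq P t) (fseq n t) := dist_triangle _ _ _
      _ = dist (fseq m t) (fseq P t) + dist (fseq n t) (fseq P t) := by rw [dist_comm (fseq P t)]
      _ < ε/2 + ε/2 := add_lt_add (hbound m hmK hmM0 (by omega)) (hbound n hnK hnM0 (by omega))
      _ = ε := by ring
  have hlim' : ∀ t : ℝ, ∃ p : X,
      (0 ≤ t → Tendsto (fun n => fseq n (min t (dist x0 (h^n • x0)))) atTop (nhds p)) := by
    intro t
    by_cases ht : 0 ≤ t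
    · obtain ⟨p, hp⟩ := hlim t ht
      exact ⟨p, fun _ => hp⟩
    · exact ⟨x0, fun h' => absurd h' ht⟩
  choose βf hβf using hlim'
  have hβ0 : βf 0 = x0 := by
    have h1 := hβf 0 le_rfl
    have h2 : (fun n => fseq n (min 0 (dist x0 (h^n • x0)))) = fun _ => x0 := by
      funext n
      rw [min_eq_left dist_nonneg, (hfseq n).1]
    rw [h2] at h1
    exact tendsto_nhds_unique h1 tendsto_const_nhds
  have hβray : ∀ s t : ℝ, 0 ≤ s → 0 ≤ t → dist (βf s) (βf t) = |s - t| := by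
    intro s t hs ht
    have h1 := (hβf s hs).dist (hβf t ht)
    have h2 : ∀ᶠ n in atTop,
        dist (fseq n (min s (dist x0 (h^n • x0)))) (fseq n (min t (dist x0 (h^n • x0)))) =
        |s - t| := by
      obtain ⟨M1, hM1⟩ := eventually_atTop.1 (tendsto_atTop.1 hdtop (max s t))
      refine eventually_atTop.2 ⟨M1, fun n hn => ?_⟩
      have hs' : s ≤ dist x0 (h^n • x0) := le_trans (le_max_left _ _) (hM1 n hn)
      have ht' : t ≤ dist x0 (h^n • x0) := le_trans (le_max_right _ _) (hM1 n hn)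
      rw [min_eq_left hs', min_eq_left ht']
      exact (hfseq n).2.2 s ⟨hs, hs'⟩ t ⟨ht, ht'⟩
    exact tendsto_nhds_unique (h1.congr' h2) tendsto_const_nhds
  refine ⟨h, ?_, ⟨βf, hβ0, hβray⟩, ⟨?_, ?_⟩, ?_⟩
  · -- infinite order
    intro hord
    obtain ⟨n, hn, hpow⟩ := isOfFinOrder_iff_pow_eq_one.1 hord
    have h1 := hgrowth (n*2) (by omega)
    have h2 : h^(n*2) = 1 := by rw [pow_mul, hpow, one_pow]
    rw [h2, one_smul, dist_self] at h1
    have h3 : (1:ℝ) ≤ (n:ℝ) := by exact_mod_cast hn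
    have h4 : ((n*2 : ℕ):ℝ) = 2*(n:ℝ) := by push_cast; ring
    rw [h4] at h1
    nlinarith
  · -- distances tend to infinity
    exact hdtop
  · -- pointwise convergence of geodesics
    intro f' hf' t ht
    have heq : ∀ n, f' n (min t (dist x0 (h^n • x0))) = fseq n (min t (dist x0 (h^n • x0))) :=
      fun n => geodesic_unique hCAT (hf' n) (hfseq n)
        ⟨le_min ht dist_nonneg, min_le_right _ _⟩
    exact (hβf t ht).congr (fun n => (heq n).symm)
  · -- the ray passes within N of g • x0
    have hcr : ∀ i : ℕ, ∃ s, s ∈ Set.Icc (0:ℝ) (dist x0 (h^(i+K₀) • x0)) ∧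
        fseq (i+K₀) s ∈ B := by
      intro i
      obtain ⟨s, h1, h2⟩ := hcrossB (i+K₀) (by omega) _ (hfseq (i+K₀))
      exact ⟨s, h1, h2⟩
    choose sc hscIcc hscB using hcr
    have hscb : ∀ i, sc i ∈ Set.Icc (D - N) (D + N) := by
      intro i
      have h1 : dist x0 (fseq (i+K₀) (sc i)) = sc i := geo_dist_left (hfseq _) (hscIcc i)
      have h2 : dist y (fseq (i+K₀) (sc i)) ≤ N := hBball _ (hscB i)
      constructor
      · have h3 : D ≤ dist x0 (fseq (i+K₀) (sc i)) + dist (fseq (i+K₀) (sc i)) y := by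
          rw [← hDd]
          exact dist_triangle _ _ _
        rw [h1, dist_comm] at h3
        linarith
      · have h3 : dist x0 (fseq (i+K₀) (sc i)) ≤ dist x0 y + dist y (fseq (i+K₀) (sc i)) :=
          dist_triangle _ _ _
        rw [h1, hDd] at h3
        linarith
    obtain ⟨sstar, hsstarIcc, φ, hφ, hconv⟩ :=
      (isCompact_Icc (a := D-N) (b := D+N)).tendsto_subseq hscb
    have hsstar0 : 0 ≤ sstar := by
      have := hsstarIcc.1
      linarith
    have hφtop : Tendsto (fun i => φ i + K₀) atTop atTop := by
      refine tendsto_atTop_mono (fun i => ?_) tendsto_id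
      exact le_trans hφ.le_apply (Nat.le_add_right _ _)
    have hkey : Tendsto (fun i => fseq (φ i + K₀) (sc (φ i))) atTop (nhds (βf sstar)) := by
      rw [tendsto_iff_dist_tendsto_zero]
      have hb : ∀ᶠ i in atTop,
          dist (fseq (φ i + K₀) (sc (φ i))) (βf sstar) ≤
          |sc (φ i) - sstar| +
            dist (fseq (φ i + K₀) (min sstar (dist x0 (h^(φ i + K₀) • x0)))) (βf sstar) := by
        obtain ⟨M2, hM2⟩ := eventually_atTop.1 (tendsto_atTop.1 hdtop (max sstar (D+N)))
        have hev : ∀ᶠ i in atTop, M2 ≤ φ i + K₀ := hφtop.eventually_ge_atTop M2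
        filter_upwards [hev] with i hi
        have hdm := hM2 _ hi
        have hsm : sstar ≤ dist x0 (h^(φ i + K₀) • x0) := le_trans (le_max_left _ _) hdm
        have e1 : min sstar (dist x0 (h^(φ i + K₀) • x0)) = sstar := min_eq_left hsm
        rw [e1]
        have h5 : dist (fseq (φ i + K₀) (sc (φ i))) (fseq (φ i + K₀) sstar) =
            |sc (φ i) - sstar| :=
          (hfseq _).2.2 _ (hscIcc (φ i)) _ ⟨hsstar0, hsm⟩
        calc dist (fseq (φ i + K₀) (sc (φ i))) (βf sstar)
            ≤ dist (fseq (φ i + K₀) (sc (φ i))) (fseq (φ i + K₀) sstar) +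
              dist (fseq (φ i + K₀) sstar) (βf sstar) := dist_triangle _ _ _
          _ = _ := by rw [h5]
      apply squeeze_zero' (Eventually.of_forall (fun i => dist_nonneg)) hb
      have h9 : Tendsto (fun i => |sc (φ i) - sstar|) atTop (nhds 0) := by
        have := tendsto_iff_dist_tendsto_zero.1 hconv
        simpa [Real.dist_eq] using this
      have h10 : Tendsto
          (fun i => dist (fseq (φ i + K₀) (min sstar (dist x0 (h^(φ i + K₀) • x0)))) (βf sstar))
          atTop (nhds 0) := by
        have h11 := (hβf sstar hsstar0).comp hφtop
        exact tendsto_iff_dist_tendsto_zero.1 h11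
      simpa using h9.add h10
    have hfinal : dist y (βf sstar) ≤ N := by
      have h11 : Tendsto (fun i => dist y (fseq (φ i + K₀) (sc (φ i)))) atTop
          (nhds (dist y (βf sstar))) := tendsto_const_nhds.dist hkey
      exact le_of_tendsto h11 (Eventually.of_forall fun i => hBball _ (hscB (φ i)))
    have hmem : βf sstar ∈ rayImage (⟨βf, hβ0, hβray⟩ : Boundary X x0) :=
      ⟨sstar, hsstar0, rfl⟩
    calc infDist (g • x0) (rayImage (⟨βf, hβ0, hβray⟩ : Boundary X x0))
        ≤ dist (g • x0) (βf sstar) := infDist_le_dist_of_mem hmem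
      _ ≤ N := hfinal
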